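/- Let ε ∈ (0,1) and let C, Y₁, Y₂, R be mutually independent random variables, where C is Bernoulli, Y₁ and Y₂ are square-integrable with P(Y₁ < 1) = 1 and P(Y₂ ≥ 1) = 1, and R is uniform on [1−ε, 1+ε]. Set Y′ = C·Y₁ + (1−C)·Y₂ and Y″ = C·E[Y₁] + (1−C)·E[Y₂]. Then E[Y″] = E[Y′], the standard deviation of Y″ is at most the standard deviation of Y′, and P(Y″R ≤ 1+ε) ≤ P(Y′R ≤ 1+ε). -/

import Mathlib

open MeasureTheory ProbabilityTheory Real

/-- The uniform probability measure on the interval `[a, b]`. -/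
noncomputable def uniformIcc (a b : ℝ) : Measure ℝ :=
  (ENNReal.ofReal (b - a))⁻¹ • (MeasureTheory.volume.restrict (Set.Icc a b))

/-- The median of `2*n+1` real values: their `(n+1)`-st smallest value. -/
noncomputable def medianOf {n : ℕ} (v : Fin (2 * n + 1) → ℝ) : ℝ :=
  (Multiset.sort (↑(List.ofFn v)) (· ≤ ·)).get ⟨n, by simp; omega⟩

/-- The nuisance factor `f(ε) = (1+ε)/((1-ε)² (1+ε-ε²))`. -/
noncomputable def nuisance (ε : ℝ) : ℝ := (1 + ε) / ((1 - ε) ^ 2 * (1 + ε - ε ^ 2))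

/-- The probability that a uniform `[1-ε,1+ε]` variable `r` satisfies `y*r ≤ 1+ε`, for `y ≥ 1`. -/
noncomputable def nuG (ε : ℝ) (y : ℝ) : ℝ := max (((1+ε)/y - (1-ε))/(2*ε)) 0

lemma nuG_nonneg (ε y : ℝ) : 0 ≤ nuG ε y := le_max_right _ _

lemma nuG_le_one {ε : ℝ} (hε : 0 < ε) (hε1 : ε < 1) {y : ℝ} (hy : 1 ≤ y) : nuG ε y ≤ 1 := by
  have h2ε : 0 < 2 * ε := by linarith
  have hdiv : (1+ε)/y ≤ 1+ε := div_le_self (by linarith) hy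
  have : ((1+ε)/y - (1-ε))/(2*ε) ≤ 1 := by
    rw [div_le_one h2ε]; linarith
  exact max_le this zero_le_one

lemma nuG_measurable (ε : ℝ) : Measurable (nuG ε) := by
  unfold nuG
  exact ((measurable_const.div measurable_id).sub measurable_const).div_const _ |>.max measurable_const

lemma nuG_convexOn {ε : ℝ} (hε : 0 < ε) : ConvexOn ℝ (Set.Ici 1) (nuG ε) := by
  have h2ε : (0:ℝ) < 2 * ε := by linarith
  have hsub : Set.Ici (1:ℝ) ⊆ Set.Ioi 0 := fun x hx => Set.mem_Ioi.mpr (lt_of_lt_of_le one_pos (Set.mem_Ici.mp hx))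
  have hbase : ConvexOn ℝ (Set.Ici (1:ℝ)) (fun x : ℝ => x ^ (-1 : ℤ)) :=
    (convexOn_zpow (-1)).subset hsub (convex_Ici 1)
  have h1 : ConvexOn ℝ (Set.Ici (1:ℝ))
      (fun y : ℝ => ((1+ε)/(2*ε)) • (y ^ (-1 : ℤ)) + (-(1-ε)/(2*ε))) :=
    (hbase.smul (by positivity)).add_const _
  have h2 : ConvexOn ℝ (Set.Ici (1:ℝ))
      ((fun y : ℝ => ((1+ε)/(2*ε)) • (y ^ (-1 : ℤ)) + (-(1-ε)/(2*ε))) ⊔ (fun _ => (0:ℝ))) :=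
    h1.sup (convexOn_const 0 (convex_Ici 1))
  have heq : ((fun y : ℝ => ((1+ε)/(2*ε)) • (y ^ (-1 : ℤ)) + (-(1-ε)/(2*ε))) ⊔ (fun _ => (0:ℝ)))
      = nuG ε := by
    funext y
    have hεne : ε ≠ 0 := ne_of_gt hε
    simp only [Pi.sup_apply, nuG, smul_eq_mul, zpow_neg_one]
    congr 1
    rcases eq_or_ne y 0 with hy | hy
    · simp [hy, neg_div]
    · field_simp
      ring
  rwa [heq] at h2

lemma nuG_continuousOn (ε : ℝ) : ContinuousOn (nuG ε) (Set.Ici 1) := by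
  unfold nuG
  have hinner : ContinuousOn (fun y : ℝ => ((1+ε)/y - (1-ε))/(2*ε)) (Set.Ici 1) := by
    apply ContinuousOn.div_const
    apply ContinuousOn.sub _ continuousOn_const
    exact continuousOn_const.div continuousOn_id
      (fun y hy => ne_of_gt (lt_of_lt_of_le one_pos hy))
  exact (continuous_id.max continuous_const).comp_continuousOn hinner

lemma uniformIcc_event {ε : ℝ} (hε0 : 0 < ε) (hε1 : ε < 1) {y : ℝ} (hy : 1 ≤ y) :
    uniformIcc (1-ε) (1+ε) {r : ℝ | y * r ≤ 1+ε} = ENNReal.ofReal (nuG ε y) := by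
  have hy0 : (0:ℝ) < y := lt_of_lt_of_le one_pos hy
  have h2ε : (0:ℝ) < 2 * ε := by linarith
  have hset : {r : ℝ | y * r ≤ 1+ε} = Set.Iic ((1+ε)/y) := by
    ext r; simp [Set.mem_Iic, le_div_iff₀ hy0, mul_comm]
  have ht : (1+ε)/y ≤ 1+ε := div_le_self (by linarith) hy
  have hinter : Set.Icc (1-ε) (1+ε) ∩ Set.Iic ((1+ε)/y) = Set.Icc (1-ε) ((1+ε)/y) := by
    rw [← Set.Ici_inter_Iic, Set.inter_assoc, Set.Iic_inter_Iic, Set.Ici_inter_Iic,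
      inf_eq_right.mpr ht]
  rw [hset, uniformIcc, Measure.smul_apply, Measure.restrict_apply measurableSet_Iic,
    Set.inter_comm, hinter, Real.volume_Icc]
  rw [smul_eq_mul, show (1:ℝ)+ε - (1-ε) = 2*ε by ring]
  rcases le_or_gt ((1+ε)/y) (1-ε) with h | h
  · rw [show ENNReal.ofReal ((1+ε)/y - (1-ε)) = 0 from ENNReal.ofReal_eq_zero.mpr (by linarith),
      mul_zero]
    have : nuG ε y = 0 := by
      unfold nuG
      rw [max_eq_right]
      exact div_nonpos_of_nonpos_of_nonneg (by linarith) (le_of_lt h2ε)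
    rw [this, ENNReal.ofReal_zero]
  · have hmax : nuG ε y = ((1+ε)/y - (1-ε))/(2*ε) := by
      unfold nuG
      exact max_eq_left (div_nonneg (by linarith) (le_of_lt h2ε))
    rw [hmax, ENNReal.ofReal_div_of_pos h2ε, ENNReal.div_eq_inv_mul]

lemma nuG_jensen {ε : ℝ} (hε0 : 0 < ε) (hε1 : ε < 1) (μ2 : Measure ℝ) [IsProbabilityMeasure μ2]
    (h1 : ∀ᵐ y ∂μ2, 1 ≤ y) (hInt : Integrable id μ2) :
    ENNReal.ofReal (nuG ε (∫ y, y ∂μ2)) ≤ ∫⁻ y, ENNReal.ofReal (nuG ε y) ∂μ2 := by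
  have hgi : Integrable (nuG ε ∘ id) μ2 := by
    apply Integrable.mono' (integrable_const 1) ((nuG_measurable ε).aestronglyMeasurable)
    filter_upwards [h1] with y hy
    show ‖nuG ε y‖ ≤ 1
    rw [Real.norm_eq_abs, abs_of_nonneg (nuG_nonneg ε y)]
    exact nuG_le_one hε0 hε1 hy
  have hjen := (nuG_convexOn hε0).map_integral_le (g := nuG ε) (f := id) (nuG_continuousOn ε)
    isClosed_Ici (by simpa using h1) hInt hgi
  simp only [id] at hjen
  calc ENNReal.ofReal (nuG ε (∫ y, y ∂μ2)) ≤ ENNReal.ofReal (∫ y, nuG ε y ∂μ2) :=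
        ENNReal.ofReal_le_ofReal hjen
    _ = ∫⁻ y, ENNReal.ofReal (nuG ε y) ∂μ2 :=
        ofReal_integral_eq_lintegral_ofReal (by simpa [Function.comp] using hgi)
          (Filter.Eventually.of_forall (fun y => nuG_nonneg ε y))

lemma ae_of_prob_one {Ω : Type*} [MeasureSpace Ω] [IsProbabilityMeasure (ℙ : Measure Ω)]
    {p : Ω → Prop} (hm : MeasurableSet {ω | p ω}) (h : ℙ {ω | p ω} = 1) : ∀ᵐ ω, p ω := by
  rw [ae_iff, ← Set.compl_setOf, prob_compl_eq_zero_iff hm]; exact h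

/-- Let `ε ∈ (0,1)` and `C, Y₁, Y₂, R` be mutually independent with `C`
Bernoulli (valued in `{0,1}`), `Y₁, Y₂` square-integrable with `P(Y₁ < 1) = 1` and
`P(Y₂ ≥ 1) = 1`, and `R` uniform on `[1−ε,1+ε]`.  For `Y′ = C·Y₁ + (1−C)·Y₂` and
`Y″ = C·E[Y₁] + (1−C)·E[Y₂]`: `E[Y″] = E[Y′]`, `sd(Y″) ≤ sd(Y′)`, and
`P(Y″R ≤ 1+ε) ≤ P(Y′R ≤ 1+ε)`. -/
theorem mixture_mean_replacement {Ω : Type*} [MeasureSpace Ω]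
    [IsProbabilityMeasure (ℙ : Measure Ω)]
    (ε : ℝ) (hε : ε ∈ Set.Ioo (0 : ℝ) 1)
    (C Y₁ Y₂ R : Ω → ℝ)
    (hCm : Measurable C) (hY₁m : Measurable Y₁) (hY₂m : Measurable Y₂) (hRm : Measurable R)
    (hindep : iIndepFun ![C, Y₁, Y₂, R] ℙ)
    (hC : ℙ {ω | C ω = 0 ∨ C ω = 1} = 1)
    (hY₁2 : MemLp Y₁ 2 ℙ) (hY₂2 : MemLp Y₂ 2 ℙ)
    (hY₁ : ℙ {ω | Y₁ ω < 1} = 1)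
    (hY₂ : ℙ {ω | 1 ≤ Y₂ ω} = 1)
    (hR : Measure.map R ℙ = uniformIcc (1 - ε) (1 + ε)) :
    (∫ ω, (C ω * (∫ x, Y₁ x ∂ℙ) + (1 - C ω) * (∫ x, Y₂ x ∂ℙ)) ∂ℙ =
        ∫ ω, (C ω * Y₁ ω + (1 - C ω) * Y₂ ω) ∂ℙ) ∧
      Real.sqrt (variance (fun ω => C ω * (∫ x, Y₁ x ∂ℙ) + (1 - C ω) * (∫ x, Y₂ x ∂ℙ)) ℙ) ≤
        Real.sqrt (variance (fun ω => C ω * Y₁ ω + (1 - C ω) * Y₂ ω) ℙ) ∧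
      ℙ {ω | (C ω * (∫ x, Y₁ x ∂ℙ) + (1 - C ω) * (∫ x, Y₂ x ∂ℙ)) * R ω ≤ 1 + ε} ≤
        ℙ {ω | (C ω * Y₁ ω + (1 - C ω) * Y₂ ω) * R ω ≤ 1 + ε} := by
  obtain ⟨hε0, hε1⟩ := hε
  -- a.e. facts
  have haeC : ∀ᵐ ω ∂(ℙ : Measure Ω), C ω = 0 ∨ C ω = 1 := by
    refine ae_of_prob_one ?_ hC
    rw [Set.setOf_or]
    exact (hCm (measurableSet_singleton 0)).union (hCm (measurableSet_singleton 1))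
  have haeY₁ : ∀ᵐ ω ∂(ℙ : Measure Ω), Y₁ ω < 1 :=
    ae_of_prob_one (measurableSet_lt hY₁m measurable_const) hY₁
  have haeY₂ : ∀ᵐ ω ∂(ℙ : Measure Ω), 1 ≤ Y₂ ω :=
    ae_of_prob_one (measurableSet_le measurable_const hY₂m) hY₂
  have haeR : ∀ᵐ ω ∂(ℙ : Measure Ω), R ω ∈ Set.Icc (1-ε) (1+ε) := by
    refine ae_of_prob_one (hRm measurableSet_Icc) ?_
    have : {ω | R ω ∈ Set.Icc (1-ε) (1+ε)} = R ⁻¹' (Set.Icc (1-ε) (1+ε)) := rfl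
    rw [this, ← Measure.map_apply hRm measurableSet_Icc, hR, uniformIcc, Measure.smul_apply,
      Measure.restrict_apply measurableSet_Icc, Set.inter_self, Real.volume_Icc, smul_eq_mul,
      show (1:ℝ)+ε - (1-ε) = 2*ε by ring]
    exact ENNReal.inv_mul_cancel (by simp [hε0]) ENNReal.ofReal_ne_top
  -- independence
  have hmeas4 : ∀ i, Measurable (![C, Y₁, Y₂, R] i) := fun i => by
    fin_cases i <;> [exact hCm; exact hY₁m; exact hY₂m; exact hRm]
  have hCY₁ : IndepFun C Y₁ ℙ := hindep.indepFun (show (0:Fin 4) ≠ 1 by decide)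
  have hCY₂ : IndepFun C Y₂ ℙ := hindep.indepFun (show (0:Fin 4) ≠ 2 by decide)
  have hCR : IndepFun C R ℙ := hindep.indepFun (show (0:Fin 4) ≠ 3 by decide)
  have hY₂R : IndepFun Y₂ R ℙ := hindep.indepFun (show (2:Fin 4) ≠ 3 by decide)
  have hPairC : IndepFun (fun ω => (Y₂ ω, R ω)) C ℙ :=
    hindep.indepFun_prodMk hmeas4 2 3 0 (by decide) (by decide)
  have h1mCY₂ : IndepFun (fun ω => 1 - C ω) Y₂ ℙ :=
    hCY₂.comp (measurable_const.sub measurable_id) measurable_id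
  -- integrability
  have hY₁i : Integrable Y₁ ℙ := hY₁2.integrable one_le_two
  have hY₂i : Integrable Y₂ ℙ := hY₂2.integrable one_le_two
  have hC2 : MemLp C 2 ℙ := by
    refine MemLp.of_bound hCm.aestronglyMeasurable 1 ?_
    filter_upwards [haeC] with ω hω
    rcases hω with h | h <;> simp [h]
  have hCi : Integrable C ℙ := hC2.integrable one_le_two
  have hC1i : Integrable (fun ω => 1 - C ω) ℙ := (integrable_const 1).sub hCi
  have hCY₁i : Integrable (fun ω => C ω * Y₁ ω) ℙ := hCY₁.integrable_mul hCi hY₁i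
  have hCY₂i : Integrable (fun ω => (1 - C ω) * Y₂ ω) ℙ := h1mCY₂.integrable_mul hC1i hY₂i
  set a := ∫ x, Y₁ x ∂ℙ with ha
  set b := ∫ x, Y₂ x ∂ℙ with hb
  -- part 1
  have hE'' : ∫ ω, (C ω * a + (1 - C ω) * b) ∂ℙ = (∫ ω, C ω ∂ℙ) * a + (∫ ω, (1 - C ω) ∂ℙ) * b := by
    rw [integral_add (hCi.mul_const a) (hC1i.mul_const b), integral_mul_const, integral_mul_const]
  have hE' : ∫ ω, (C ω * Y₁ ω + (1 - C ω) * Y₂ ω) ∂ℙ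
      = (∫ ω, C ω ∂ℙ) * a + (∫ ω, (1 - C ω) ∂ℙ) * b := by
    rw [integral_add hCY₁i hCY₂i]
    rw [show ∫ ω, C ω * Y₁ ω ∂ℙ = (∫ ω, C ω ∂ℙ) * ∫ ω, Y₁ ω ∂ℙ from
      hCY₁.integral_fun_mul_eq_mul_integral hCi.1 hY₁i.1]
    rw [show ∫ ω, (1 - C ω) * Y₂ ω ∂ℙ = (∫ ω, (1 - C ω) ∂ℙ) * ∫ ω, Y₂ ω ∂ℙ from
      h1mCY₂.integral_fun_mul_eq_mul_integral hC1i.1 hY₂i.1]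
  refine ⟨hE''.trans hE'.symm, ?_, ?_⟩
  · -- variance comparison
    have hY'2 : MemLp (fun ω => C ω * Y₁ ω + (1 - C ω) * Y₂ ω) 2 ℙ := by
      refine MemLp.mono' (g := fun ω => ‖Y₁ ω‖ + ‖Y₂ ω‖) (hY₁2.norm.add hY₂2.norm) ?_ ?_
      · exact ((hCm.mul hY₁m).add ((measurable_const.sub hCm).mul hY₂m)).aestronglyMeasurable
      · filter_upwards [haeC] with ω hω
        rcases hω with h | h <;> simp [h, Real.norm_eq_abs, abs_nonneg]
    have hY''2 : MemLp (fun ω => C ω * a + (1 - C ω) * b) 2 ℙ := by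
      refine MemLp.of_bound
        ((hCm.mul_const a).add ((measurable_const.sub hCm).mul_const b)).aestronglyMeasurable
        (|a| + |b|) ?_
      filter_upwards [haeC] with ω hω
      rcases hω with h | h <;> simp [h, Real.norm_eq_abs, abs_nonneg]
    have hvar₁ : a ^ 2 ≤ ∫ ω, Y₁ ω ^ 2 ∂ℙ := by
      have h := variance_nonneg Y₁ ℙ
      rw [variance_eq_sub hY₁2] at h
      simp only [Pi.pow_apply] at h
      linarith
    have hvar₂ : b ^ 2 ≤ ∫ ω, Y₂ ω ^ 2 ∂ℙ := by
      have h := variance_nonneg Y₂ ℙ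
      rw [variance_eq_sub hY₂2] at h
      simp only [Pi.pow_apply] at h
      linarith
    have hsq' : (fun ω => (C ω * Y₁ ω + (1 - C ω) * Y₂ ω) ^ 2)
        =ᵐ[(ℙ : Measure Ω)] (fun ω => C ω * Y₁ ω ^ 2 + (1 - C ω) * Y₂ ω ^ 2) := by
      filter_upwards [haeC] with ω hω
      rcases hω with h | h <;> simp [h] <;> ring
    have hsq'' : (fun ω => (C ω * a + (1 - C ω) * b) ^ 2)
        =ᵐ[(ℙ : Measure Ω)] (fun ω => C ω * a ^ 2 + (1 - C ω) * b ^ 2) := by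
      filter_upwards [haeC] with ω hω
      rcases hω with h | h <;> simp [h] <;> ring
    have hCY₁sq : IndepFun C (fun ω => Y₁ ω ^ 2) ℙ :=
      hCY₁.comp measurable_id (measurable_id.pow_const 2)
    have h1mCY₂sq : IndepFun (fun ω => 1 - C ω) (fun ω => Y₂ ω ^ 2) ℙ :=
      hCY₂.comp (measurable_const.sub measurable_id) (measurable_id.pow_const 2)
    have hY₁sqi : Integrable (fun ω => Y₁ ω ^ 2) ℙ := hY₁2.integrable_sq
    have hY₂sqi : Integrable (fun ω => Y₂ ω ^ 2) ℙ := hY₂2.integrable_sq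
    have hI2' : ∫ ω, (C ω * Y₁ ω + (1 - C ω) * Y₂ ω) ^ 2 ∂ℙ
        = (∫ ω, C ω ∂ℙ) * (∫ ω, Y₁ ω ^ 2 ∂ℙ) + (∫ ω, (1 - C ω) ∂ℙ) * (∫ ω, Y₂ ω ^ 2 ∂ℙ) := by
      have i1 : Integrable (fun ω => C ω * Y₁ ω ^ 2) ℙ := hCY₁sq.integrable_mul hCi hY₁sqi
      have i2 : Integrable (fun ω => (1 - C ω) * Y₂ ω ^ 2) ℙ := h1mCY₂sq.integrable_mul hC1i hY₂sqi
      rw [integral_congr_ae hsq', integral_add i1 i2]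
      rw [show ∫ ω, C ω * Y₁ ω ^ 2 ∂ℙ = (∫ ω, C ω ∂ℙ) * ∫ ω, Y₁ ω ^ 2 ∂ℙ from
        hCY₁sq.integral_fun_mul_eq_mul_integral hCi.1 hY₁sqi.1]
      rw [show ∫ ω, (1 - C ω) * Y₂ ω ^ 2 ∂ℙ = (∫ ω, (1 - C ω) ∂ℙ) * ∫ ω, Y₂ ω ^ 2 ∂ℙ from
        h1mCY₂sq.integral_fun_mul_eq_mul_integral hC1i.1 hY₂sqi.1]
    have hI2'' : ∫ ω, (C ω * a + (1 - C ω) * b) ^ 2 ∂ℙ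
        = (∫ ω, C ω ∂ℙ) * a ^ 2 + (∫ ω, (1 - C ω) ∂ℙ) * b ^ 2 := by
      rw [integral_congr_ae hsq'',
        integral_add (hCi.mul_const _) (hC1i.mul_const _), integral_mul_const, integral_mul_const]
    have hp : 0 ≤ ∫ ω, C ω ∂ℙ := by
      refine integral_nonneg_of_ae ?_
      filter_upwards [haeC] with ω hω
      rcases hω with h | h <;> simp [h]
    have hq : 0 ≤ ∫ ω, (1 - C ω) ∂ℙ := by
      refine integral_nonneg_of_ae ?_
      filter_upwards [haeC] with ω hω
      rcases hω with h | h <;> simp [h]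
    apply Real.sqrt_le_sqrt
    rw [variance_eq_sub hY''2, variance_eq_sub hY'2]
    simp only [Pi.pow_apply]
    rw [hE'', hE', hI2'', hI2']
    have h1 := mul_le_mul_of_nonneg_left hvar₁ hp
    have h2 := mul_le_mul_of_nonneg_left hvar₂ hq
    linarith
  · -- probability comparison
    have hb1 : 1 ≤ b := by
      have h := integral_mono_ae (integrable_const (1:ℝ)) hY₂i haeY₂
      simpa using h
    set μ2 := Measure.map Y₂ ℙ with hμ2
    have hμ2prob : IsProbabilityMeasure μ2 := Measure.isProbabilityMeasure_map hY₂m.aemeasurable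
    have hae2 : ∀ᵐ y ∂μ2, 1 ≤ y := by
      rw [hμ2]
      exact (ae_map_iff hY₂m.aemeasurable measurableSet_Ici).mpr haeY₂
    have hid2 : Integrable id μ2 := by
      rw [hμ2, integrable_map_measure aestronglyMeasurable_id hY₂m.aemeasurable]
      exact hY₂i
    have hint2 : ∫ y, y ∂μ2 = b := by
      rw [hμ2, hb]
      exact integral_map hY₂m.aemeasurable aestronglyMeasurable_id
    have hmulset : MeasurableSet {p : ℝ × ℝ | p.1 * p.2 ≤ 1+ε} :=
      measurableSet_le (measurable_fst.mul measurable_snd) measurable_const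
    have hbset : MeasurableSet {r : ℝ | b * r ≤ 1+ε} :=
      measurableSet_le (measurable_const.mul measurable_id) measurable_const
    have hmapPair : Measure.map (fun ω => (Y₂ ω, R ω)) ℙ = μ2.prod (Measure.map R ℙ) :=
      (indepFun_iff_map_prod_eq_prod_map_map hY₂m.aemeasurable hRm.aemeasurable).mp hY₂R
    have hkey : ENNReal.ofReal (nuG ε b) ≤ ℙ {ω | Y₂ ω * R ω ≤ 1 + ε} := by
      have h1 : ℙ {ω | Y₂ ω * R ω ≤ 1 + ε}
          = ∫⁻ y, (Measure.map R ℙ) {r | y * r ≤ 1 + ε} ∂μ2 := by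
        have hpre : {ω | Y₂ ω * R ω ≤ 1+ε}
            = (fun ω => (Y₂ ω, R ω)) ⁻¹' {p : ℝ×ℝ | p.1 * p.2 ≤ 1+ε} := rfl
        rw [hpre, ← Measure.map_apply (hY₂m.prodMk hRm) hmulset, hmapPair,
          Measure.prod_apply hmulset]
        rfl
      have h2 : ∫⁻ y, (Measure.map R ℙ) {r | y * r ≤ 1 + ε} ∂μ2
          = ∫⁻ y, ENNReal.ofReal (nuG ε y) ∂μ2 := by
        refine lintegral_congr_ae ?_
        filter_upwards [hae2] with y hy
        rw [hR, uniformIcc_event hε0 hε1 hy]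
      rw [h1, h2, ← hint2]
      exact nuG_jensen hε0 hε1 μ2 hae2 hid2
    have hPb : ℙ {ω | b * R ω ≤ 1 + ε} = ENNReal.ofReal (nuG ε b) := by
      have hpre : {ω | b * R ω ≤ 1+ε} = R ⁻¹' {r | b * r ≤ 1+ε} := rfl
      rw [hpre, ← Measure.map_apply hRm hbset, hR, uniformIcc_event hε0 hε1 hb1]
    set S1 := C ⁻¹' {(1:ℝ)} with hS1
    have hS1m : MeasurableSet S1 := hCm (measurableSet_singleton 1)
    set T := {ω | Y₂ ω * R ω ≤ 1+ε} with hT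
    have hTm : MeasurableSet T := (hY₂m.prodMk hRm) hmulset
    set Tb := {ω | b * R ω ≤ 1+ε} with hTb
    have hTbm : MeasurableSet Tb := hRm hbset
    have hup : ℙ {ω | (C ω * a + (1 - C ω) * b) * R ω ≤ 1 + ε} ≤ ℙ S1 + ℙ (S1ᶜ ∩ Tb) := by
      have hsub : ∀ᵐ ω ∂(ℙ : Measure Ω),
          ω ∈ {ω | (C ω * a + (1 - C ω) * b) * R ω ≤ 1 + ε} → ω ∈ S1 ∪ (S1ᶜ ∩ Tb) := by
        filter_upwards [haeC] with ω hω hmem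
        rcases hω with h | h
        · right
          constructor
          · simp only [Set.mem_compl_iff, hS1, Set.mem_preimage, Set.mem_singleton_iff, h]
            norm_num
          · simp only [hTb, Set.mem_setOf_eq]
            simpa [h] using hmem
        · exact Or.inl h
      exact le_trans (measure_mono_ae hsub) (measure_union_le _ _)
    have hmulC : ℙ (S1ᶜ ∩ Tb) = ℙ S1ᶜ * ℙ Tb := by
      have h := hCR.measure_inter_preimage_eq_mul (s := ({(1:ℝ)}ᶜ : Set ℝ))
        (t := {r : ℝ | b * r ≤ 1+ε}) (measurableSet_singleton 1).compl hbset
      simpa [Set.preimage_compl] using h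
    have hmulC' : ℙ (S1ᶜ ∩ T) = ℙ S1ᶜ * ℙ T := by
      have h := hPairC.measure_inter_preimage_eq_mul (s := {p : ℝ×ℝ | p.1 * p.2 ≤ 1+ε})
        (t := ({(1:ℝ)}ᶜ : Set ℝ)) hmulset (measurableSet_singleton 1).compl
      rw [Set.inter_comm, mul_comm] at h
      simpa [Set.preimage_compl] using h
    have hdisj : Disjoint S1 (S1ᶜ ∩ T) :=
      Disjoint.mono_right Set.inter_subset_left disjoint_compl_right
    have hlow : ℙ S1 + ℙ (S1ᶜ ∩ T) ≤ ℙ {ω | (C ω * Y₁ ω + (1 - C ω) * Y₂ ω) * R ω ≤ 1 + ε} := by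
      rw [← measure_union hdisj (hS1m.compl.inter hTm)]
      have hsub : ∀ᵐ ω ∂(ℙ : Measure Ω), ω ∈ S1 ∪ (S1ᶜ ∩ T) →
          ω ∈ {ω | (C ω * Y₁ ω + (1 - C ω) * Y₂ ω) * R ω ≤ 1 + ε} := by
        filter_upwards [haeC, haeY₁, haeR] with ω h1 h2 h3 hmem
        have hR0 : 0 ≤ R ω := le_trans (by linarith) h3.1
        rcases hmem with hmem | ⟨hnot1, hmemT⟩
        · have hc : C ω = 1 := hmem
          show (C ω * Y₁ ω + (1 - C ω) * Y₂ ω) * R ω ≤ 1 + ε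
          rw [hc]
          calc (1 * Y₁ ω + (1 - 1) * Y₂ ω) * R ω = Y₁ ω * R ω := by ring
            _ ≤ 1 * R ω := mul_le_mul_of_nonneg_right (le_of_lt h2) hR0
            _ = R ω := one_mul _
            _ ≤ 1 + ε := h3.2
        · have hc : C ω = 0 := by
            rcases h1 with h | h
            · exact h
            · exact absurd h hnot1
          show (C ω * Y₁ ω + (1 - C ω) * Y₂ ω) * R ω ≤ 1 + ε
          rw [hc]
          have hYR : Y₂ ω * R ω ≤ 1 + ε := hmemT
          calc (0 * Y₁ ω + (1 - 0) * Y₂ ω) * R ω = Y₂ ω * R ω := by ring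
            _ ≤ 1 + ε := hYR
      exact measure_mono_ae hsub
    calc ℙ {ω | (C ω * a + (1 - C ω) * b) * R ω ≤ 1 + ε}
        ≤ ℙ S1 + ℙ (S1ᶜ ∩ Tb) := hup
      _ = ℙ S1 + ℙ S1ᶜ * ℙ Tb := by rw [hmulC]
      _ ≤ ℙ S1 + ℙ S1ᶜ * ℙ T := by
          refine add_le_add_right (mul_le_mul_right ?_ _) _
          rw [hTb, hPb, hT]
          exact hkey
      _ = ℙ S1 + ℙ (S1ᶜ ∩ T) := by rw [hmulC']
      _ ≤ ℙ {ω | (C ω * Y₁ ω + (1 - C ω) * Y₂ ω) * R ω ≤ 1 + ε} := hlow
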